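/- Let M be a matroid flock on E, let α ∈ ℤ^E and let I ⊆ J ⊆ E. Then r_α(J) = r_α(I) + r_{α+e_I}(J \ I), where r_β denotes the rank function of the matroid M_β and e_I := Σ_{i∈I} e_i. -/

import Mathlib

open Matroid Set

namespace FrobFlock

variable {E : Type*}

/-- The local rank function of a matroid: the size of a largest independent subset of `X`. -/
noncomputable def rk (M : Matroid E) (X : Set E) : ℕ :=
  sSup {n | ∃ I, I ⊆ X ∧ M.Indep I ∧ I.ncard = n}

/-- Deletion of the set `D` from the matroid `M`. -/
def mdel (M : Matroid E) (D : Set E) : Matroid E := M ↾ (M.E \ D)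

/-- Contraction of the set `C` in the matroid `M` (defined by duality). -/
def mcon (M : Matroid E) (C : Set E) : Matroid E := (mdel M✶ C)✶

/-- The 0/1 indicator vector of a set `I ⊆ E`. -/
noncomputable def eVec (I : Set E) : E → ℤ := I.indicator 1

/-- `M : ℤ^E → Matroid E` is a matroid flock of rank `d` on `E`:
each `M α` is a matroid on ground set `E` of rank `d`, satisfying (MF1) and (MF2). -/
def IsMatroidFlock [Fintype E] (d : ℕ) (M : (E → ℤ) → Matroid E) : Prop :=
  (∀ α, (M α).E = Set.univ) ∧
  (∀ α, rk (M α) Set.univ = d) ∧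
  (∀ α (i : E), mcon (M α) {i} = mdel (M (α + eVec {i})) {i}) ∧
  (∀ α, M α = M (α + 1))

/-- A matroid valuation `ν : binom(E,d) → ℤ ∪ {∞}`, encoded as a function on all finsets
which takes the value `⊤` outside `binom(E,d)`. -/
def IsValuation [DecidableEq E] (d : ℕ) (ν : Finset E → WithTop ℤ) : Prop :=
  (∀ B : Finset E, B.card ≠ d → ν B = ⊤) ∧
  (∃ B : Finset E, B.card = d ∧ ν B ≠ ⊤) ∧
  (∀ B B' : Finset E, B.card = d → B'.card = d → ∀ i ∈ B \ B', ∃ j ∈ B' \ B,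
      ν (insert j (B.erase i)) + ν (insert i (B'.erase j)) ≤ ν B + ν B')

/-- `B ∈ B^ν_α`: the set `B` attains the supremum `g^ν(α)`, i.e. `B` is a basis of `M^ν_α`. -/
def OptBasis (d : ℕ) (ν : Finset E → WithTop ℤ) (α : E → ℤ) (B : Finset E) : Prop :=
  B.card = d ∧ ν B ≠ ⊤ ∧ ∀ B' : Finset E, B'.card = d →
    ((∑ i ∈ B', α i : ℤ) : WithTop ℤ) + ν B ≤ ((∑ i ∈ B, α i : ℤ) : WithTop ℤ) + ν B'


section Aux

variable {α : Type*} {M : Matroid α} {X C D I B J B' : Set α}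

/-- Bases of a set `X` are equicardinal. -/
lemma basis_encard_eq (h1 : M.IsBasis B X) (h2 : M.IsBasis B' X) : B.encard = B'.encard :=
  Matroid.IsBase.encard_eq_encard_of_isBase h1.restrict_isBase h2.restrict_isBase

lemma indep_encard_le_basis (hB : M.IsBasis B X) (hI : M.Indep I) (hIX : I ⊆ X) :
    I.encard ≤ B.encard := by
  obtain ⟨B'', hB'', hIB''⟩ := hI.subset_isBasis_of_subset hIX hB.subset_ground
  exact (Set.encard_le_encard hIB'').trans_eq (basis_encard_eq hB'' hB)

lemma rk_eq_ncard_basis [Fintype α] (hB : M.IsBasis B X) : rk M X = B.ncard := by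
  have hbdd : BddAbove {n | ∃ I, I ⊆ X ∧ M.Indep I ∧ I.ncard = n} := by
    refine ⟨Fintype.card α, ?_⟩
    rintro n ⟨I, hIX, hI, rfl⟩
    simpa [Set.ncard_univ] using Set.ncard_le_ncard (subset_univ I) (Set.toFinite _)
  apply le_antisymm
  · refine csSup_le ⟨0, ∅, empty_subset _, M.empty_indep, Set.ncard_empty _⟩ ?_
    rintro n ⟨I, hIX, hI, rfl⟩
    have h := indep_encard_le_basis hB hI hIX
    have hBfin : B.encard ≠ ⊤ := B.toFinite.encard_lt_top.ne
    rw [Set.ncard_def, Set.ncard_def]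
    exact ENat.toNat_le_toNat h hBfin
  · exact le_csSup hbdd ⟨B, hB.subset, hB.indep, rfl⟩

lemma rk_empty (M : Matroid α) : rk M ∅ = 0 := by
  have : {n | ∃ I, I ⊆ (∅ : Set α) ∧ M.Indep I ∧ I.ncard = n} = {0} := by
    ext n
    constructor
    · rintro ⟨I, hI, -, rfl⟩
      simp [Set.subset_empty_iff.mp hI]
    · rintro rfl
      exact ⟨∅, subset_rfl, M.empty_indep, Set.ncard_empty _⟩
  rw [rk, this, csSup_singleton]

lemma rk_mdel (hX : X ⊆ M.E \ D) : rk (mdel M D) X = rk M X := by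
  unfold rk mdel
  congr 1
  ext n
  constructor
  · rintro ⟨I, hIX, hI, rfl⟩
    exact ⟨I, hIX, (Matroid.restrict_indep_iff.mp hI).1, rfl⟩
  · rintro ⟨I, hIX, hI, rfl⟩
    exact ⟨I, hIX, Matroid.restrict_indep_iff.mpr ⟨hI, hIX.trans hX⟩, rfl⟩

lemma mcon_indep_iff (hC : C ⊆ M.E) :
    (mcon M C).Indep X ↔ X ⊆ M.E \ C ∧ ∃ J, M.IsBasis J C ∧ M.Indep (X ∪ J) := by
  have hE : (M✶).E = M.E := rfl
  rw [mcon, mdel, hE, Matroid.dual_indep_iff_exists']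
  simp only [Matroid.restrict_ground_eq]
  constructor
  · rintro ⟨hX, B', hB', hdisj⟩
    rw [Matroid.isBase_restrict_iff'] at hB'
    have hB'' : M✶.IsBasis B' (M.E \ C) := hB'.isBasis (by exact diff_subset)
    obtain ⟨Bd, hBd, hB'eq⟩ := hB''.exists_isBase
    have hBdE : Bd ⊆ M.E := hBd.subset_ground
    set B : Set α := M.E \ Bd with hBdef
    have hB : M.IsBase B := hBd.compl_isBase_of_dual
    have hcompl : M.E \ B = Bd := diff_diff_cancel_left hBdE
    have hbasis : M.IsBasis (B ∩ C) C := by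
      rw [Matroid.IsBase.inter_isBasis_iff_compl_inter_isBasis_dual hB hC, hcompl, ← hB'eq]
      exact hB''
    refine ⟨hX, B ∩ C, hbasis, hB.indep.subset ?_⟩
    apply union_subset _ inter_subset_left
    intro x hx
    have hxE : x ∈ M.E := (hX hx).1
    have hxC : x ∉ C := (hX hx).2
    refine ⟨hxE, fun hxBd => ?_⟩
    exact (disjoint_left.mp hdisj hx) (hB'eq ▸ ⟨hxBd, hxE, hxC⟩)
  · rintro ⟨hX, J, hJ, hXJ⟩
    have hXC : X ∪ J ⊆ X ∪ C := union_subset_union_right X hJ.subset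
    have hXCE : X ∪ C ⊆ M.E := union_subset (hX.trans diff_subset) hC
    obtain ⟨B₀, hB₀, hXJB₀⟩ := hXJ.subset_isBasis_of_subset hXC hXCE
    obtain ⟨B, hB, hB₀B⟩ := hB₀.indep.exists_isBase_superset
    have hJB₀ : J ⊆ B₀ := (subset_union_right).trans hXJB₀
    have hBC : B ∩ C = J := by
      apply le_antisymm
      · rintro b ⟨hbB, hbC⟩
        have hbB₀ : b ∈ B₀ :=
          hB₀.mem_of_insert_indep (Or.inr hbC) (hB.indep.subset (insert_subset hbB hB₀B))
        exact hJ.mem_of_insert_indep hbC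
          (hB₀.indep.subset (insert_subset hbB₀ hJB₀))
      · exact subset_inter (hJB₀.trans hB₀B) hJ.subset
    have hbasis : M✶.IsBasis ((M.E \ B) ∩ (M.E \ C)) (M.E \ C) := by
      rw [← Matroid.IsBase.inter_isBasis_iff_compl_inter_isBasis_dual hB hC, hBC]
      exact hJ
    refine ⟨hX, (M.E \ B) ∩ (M.E \ C), ?_, ?_⟩
    · rw [Matroid.isBase_restrict_iff']
      exact hbasis.isBasis'
    · have hXB : X ⊆ B := (subset_union_left.trans hXJB₀).trans hB₀B
      exact disjoint_of_subset hXB inter_subset_left disjoint_sdiff_right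
end Aux

section Aux2
variable {α : Type*} {M : Matroid α} {X C D I B J B' : Set α}

lemma mcon_basis [Fintype α] (hC : C ⊆ M.E) (hXE : X ⊆ M.E) (hCX : C ⊆ X)
    (hJ : M.IsBasis J C) (hB : M.IsBasis B X) (hJB : J ⊆ B) (hBC : B ∩ C = J) :
    (mcon M C).IsBasis (B \ C) (X \ C) := by
  have hBX : B ⊆ X := hB.subset
  have hBunion : (B \ C) ∪ J = B := by
    rw [← hBC, diff_union_inter]
  have hindep : (mcon M C).Indep (B \ C) := by
    rw [mcon_indep_iff hC]
    refine ⟨diff_subset_diff_left hB.indep.subset_ground, J, hJ, ?_⟩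
    rw [hBunion]; exact hB.indep
  refine hindep.isBasis_of_forall_insert (diff_subset_diff_left hBX) ?_
  rintro e ⟨heX, heB⟩
  have heC : e ∉ C := heX.2
  have heBn : e ∉ B := fun h => heB ⟨h, heC⟩
  constructor
  · -- not indep in mcon
    rw [mcon_indep_iff hC]
    rintro ⟨-, J', hJ', hind⟩
    have hJ'C : J' ⊆ C := hJ'.subset
    have hsub : insert e (B \ C) ∪ J' ⊆ X :=
      union_subset (insert_subset heX.1 (diff_subset.trans hBX)) (hJ'C.trans hCX)
    have hle := indep_encard_le_basis hB hind hsub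
    have hdisj1 : Disjoint (B \ C) J' := disjoint_of_subset_right hJ'C disjoint_sdiff_left
    have heJ' : e ∉ (B \ C) ∪ J' := by
      rintro (h | h)
      · exact heB h
      · exact heC (hJ'C h)
    have hcard : (insert e (B \ C) ∪ J').encard = (B \ C).encard + J'.encard + 1 := by
      rw [insert_union, Set.encard_insert_of_notMem heJ', Set.encard_union_eq hdisj1]
    have hJJ' : J'.encard = J.encard := basis_encard_eq hJ' hJ
    have hBcard : B.encard = (B \ C).encard + J.encard := by
      rw [← Set.encard_union_eq (disjoint_of_subset_right hJ.subset disjoint_sdiff_left),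
        hBunion]
    rw [hcard, hJJ', ← hBcard] at hle
    have hfin : B.encard ≠ ⊤ := B.toFinite.encard_lt_top.ne
    exact lt_irrefl _ ((ENat.add_one_le_iff hfin).mp hle)
  · -- subset of ground
    have : (mcon M C).E = M.E \ C := rfl
    rw [this]
    exact insert_subset ⟨hXE heX.1, heC⟩ (diff_subset_diff_left hB.indep.subset_ground)

lemma rk_mcon [Fintype α] (hXE : X ⊆ M.E) (hCX : C ⊆ X) :
    rk M X = rk M C + rk (mcon M C) (X \ C) := by
  have hC : C ⊆ M.E := hCX.trans hXE
  obtain ⟨J, hJ⟩ := M.exists_isBasis C hC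
  obtain ⟨B, hB, hJB⟩ := hJ.indep.subset_isBasis_of_subset (hJ.subset.trans hCX) hXE
  have hBC : B ∩ C = J := by
    apply le_antisymm
    · rintro b ⟨hbB, hbC⟩
      exact hJ.mem_of_insert_indep hbC (hB.indep.subset (insert_subset hbB hJB))
    · exact subset_inter hJB hJ.subset
  rw [rk_eq_ncard_basis hB, rk_eq_ncard_basis hJ,
    rk_eq_ncard_basis (mcon_basis hC hXE hCX hJ hB hJB hBC)]
  have hBunion : J ∪ (B \ C) = B := by rw [← hBC, inter_union_diff]
  have h2 := Set.ncard_union_eq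
    (disjoint_of_subset_left hJ.subset disjoint_sdiff_right) (J.toFinite) ((B \ C).toFinite)
  rw [hBunion] at h2
  exact h2

end Aux2

lemma eVec_empty : eVec (∅ : Set E) = 0 := by
  funext x; simp [eVec]

lemma eVec_insert {i : E} {I : Set E} (hi : i ∉ I) :
    eVec {i} + eVec I = eVec (insert i I) := by
  funext x
  simp only [eVec, Pi.add_apply]
  by_cases hx : x = i
  · subst hx
    rw [Set.indicator_of_mem (mem_singleton _), Set.indicator_of_notMem hi,
      Set.indicator_of_mem (mem_insert _ _)]
    simp
  · rw [Set.indicator_of_notMem (by simpa using hx)]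
    have : x ∈ insert i I ↔ x ∈ I := by simp [hx]
    by_cases hxI : x ∈ I
    · rw [Set.indicator_of_mem hxI, Set.indicator_of_mem (this.mpr hxI)]
      simp
    · rw [Set.indicator_of_notMem hxI, Set.indicator_of_notMem (fun h => hxI (this.mp h))]
      simp

lemma flock_step [Fintype E] {d : ℕ} {M : (E → ℤ) → Matroid E}
    (hM : IsMatroidFlock d M) (α : E → ℤ) {i : E} {J : Set E} (hiJ : i ∈ J) :
    rk (M α) J = rk (M α) {i} + rk (M (α + eVec {i})) (J \ {i}) := by
  have hE : (M α).E = Set.univ := hM.1 α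
  have hE' : (M (α + eVec {i})).E = Set.univ := hM.1 _
  rw [rk_mcon (M := M α) (X := J) (C := {i}) (by rw [hE]; exact subset_univ J)
    (singleton_subset_iff.mpr hiJ), hM.2.2.1 α i,
    rk_mdel (by rw [hE']; exact diff_subset_diff_left (subset_univ J))]

theorem flock_rank_triangle' [Fintype E] (d : ℕ) (M : (E → ℤ) → Matroid E)
    (hM : IsMatroidFlock d M) (I : Set E) :
    ∀ (α : E → ℤ) (J : Set E), I ⊆ J →
      rk (M α) J = rk (M α) I + rk (M (α + eVec I)) (J \ I) := by
  refine Set.Finite.induction_on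
    (motive := fun I _ => ∀ (α : E → ℤ) (J : Set E), I ⊆ J →
      rk (M α) J = rk (M α) I + rk (M (α + eVec I)) (J \ I)) I I.toFinite ?_ ?_
  · intro α J _
    rw [rk_empty, eVec_empty, add_zero, diff_empty, zero_add]
  · intro a s ha hs ih α J hJ
    have haJ : a ∈ J := hJ (mem_insert a s)
    have h1 := flock_step hM α haJ
    have h2 := ih (α + eVec {a}) (J \ {a})
      (subset_diff_singleton ((subset_insert a s).trans hJ) ha)
    have h3 := flock_step hM α (mem_insert a s)
    have hins : (insert a s : Set E) \ {a} = s := by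
      rw [insert_diff_of_mem _ (mem_singleton a), diff_singleton_eq_self ha]
    rw [hins] at h3
    rw [h1, h2, h3, add_assoc, eVec_insert ha, Set.diff_diff, singleton_union, add_assoc]

/-- **Lemma.** Let `M` be a matroid flock on `E`, let `α ∈ ℤ^E` and let `I ⊆ J ⊆ E`.
Then `r_α(J) = r_α(I) + r_{α+e_I}(J \ I)`, where `r_β` is the rank function of `M_β`. -/
theorem flock_rank_triangle [Fintype E] (d : ℕ) (M : (E → ℤ) → Matroid E)
    (hM : IsMatroidFlock d M) (α : E → ℤ) (I J : Set E) (hIJ : I ⊆ J) :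
    rk (M α) J = rk (M α) I + rk (M (α + eVec I)) (J \ I) :=
  flock_rank_triangle' d M hM I α J hIJ

end FrobFlock
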